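/- Let H_{m,l} be the family of polynomials in a variable X defined by H_{0,l} = δ_{0,l} and H_{m,l} = H_{m−1,l} + n(1 + (−1)^n X/n^n)(X d/dX + (m−l)/n) H_{m−1,l−1} for m ≥ 1, with H_{m,l} = 0 outside 0 ≤ l ≤ m. Then modulo the ideal generated by X·(1 + (−1)^n X/n^n) in ℂ[X], H_{m,l} ≡ S(m, m−l) · Y^l, where Y = 1 + (−1)^n X/n^n and S denotes Stirling numbers of the second kind. -/
import Mathlib


/-- Stirling numbers of the second kind. -/
def stirling2 : ℕ → ℕ → ℕ
  | 0, 0 => 1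
  | 0, _ + 1 => 0
  | _ + 1, 0 => 0
  | m + 1, k + 1 => (k + 1) * stirling2 m (k + 1) + stirling2 m k

lemma stirling2_zero_right : ∀ m, stirling2 (m + 1) 0 = 0 := fun _ => rfl

lemma stirling2_eq_zero : ∀ m k, m < k → stirling2 m k = 0 := by
  intro m
  induction m with
  | zero =>
    intro k hk
    cases k with
    | zero => omega
    | succ k => rfl
  | succ m ihz =>
    intro k hk
    cases k with
    | zero => omega
    | succ k =>
      show (k + 1) * stirling2 m (k + 1) + stirling2 m k = 0
      rw [ihz (k + 1) (by omega), ihz k (by omega)]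
      ring

open Polynomial in
/-- The key computational lemma: if `q ≡ s Y^l` mod `(XY)` then
`Y (X q' + c q) ≡ s c Y^(l+1)` mod `(XY)`. -/
lemma keyA (a s c : ℂ) (l : ℕ) (Y q : Polynomial ℂ)
    (hY : Y = 1 + C a * X)
    (hq : q - C s * Y ^ l ∈ Ideal.span {X * Y}) :
    Y * (X * derivative q + C c * q) - C (s * c) * Y ^ (l + 1)
      ∈ Ideal.span {X * Y} := by
  obtain ⟨p, hp⟩ := Ideal.mem_span_singleton'.mp hq
  have hq' : q = C s * Y ^ l + p * (X * Y) := by linear_combination -hp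
  rw [Ideal.mem_span_singleton']
  cases l with
  | zero =>
    refine ⟨Y * X * derivative p + p * Y + p * X * C a + C c * Y * p, ?_⟩
    subst hq' hY
    simp only [derivative_mul, derivative_C, derivative_X, derivative_add,
      derivative_one, pow_zero, pow_one, mul_one, one_mul, zero_mul, mul_zero,
      zero_add, add_zero, derivative_pow, map_mul]
    ring
  | succ l =>
    refine ⟨C s * C ((l : ℂ) + 1) * Y ^ l * C a +
      (Y * X * derivative p + p * Y + p * X * C a + C c * Y * p), ?_⟩
    subst hq' hY
    simp only [derivative_mul, derivative_C, derivative_X, derivative_add,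
      derivative_one, pow_zero, pow_one, mul_one, one_mul, zero_mul, mul_zero,
      zero_add, add_zero, derivative_pow, Nat.add_sub_cancel, map_mul]
    push_cast
    ring

/-- The polynomials `H_{m,l}` defined by `H_{0,l} = δ_{0,l}` and
`H_{m,l} = H_{m−1,l} + n Y (X d/dX + (m−l)/n) H_{m−1,l−1}`, with `Y = 1+(−1)^n X/n^n`,
satisfy `H_{m,l} ≡ S(m,m−l) Y^l` modulo the ideal `(XY)` of `ℂ[X]`. -/
theorem stmt12 (n : ℕ) (hn : 2 ≤ n) (H : ℕ → ℕ → Polynomial ℂ) (Y : Polynomial ℂ)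
    (hY : Y = 1 + Polynomial.C ((-1 : ℂ) ^ n * ((n : ℂ) ^ n)⁻¹) * Polynomial.X)
    (hH00 : H 0 0 = 1)
    (hH0 : ∀ m, H (m + 1) 0 = H m 0)
    (hvanish : ∀ m l, m < l → H m l = 0)
    (hrec : ∀ m l, H (m + 1) (l + 1) =
        H m (l + 1) + Polynomial.C (n : ℂ) * Y *
          (Polynomial.X * Polynomial.derivative (H m l) +
            Polynomial.C ((((m : ℂ) + 1) - ((l : ℂ) + 1)) / (n : ℂ)) * H m l)) :
    ∀ m l, l ≤ m →
      H m l - Polynomial.C (stirling2 m (m - l) : ℂ) * Y ^ l ∈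
        Ideal.span {Polynomial.X * Y} := by
  have hn0 : (n : ℂ) ≠ 0 := Nat.cast_ne_zero.mpr (by omega)
  intro m
  induction m with
  | zero =>
    intro l hl
    interval_cases l
    simp only [hH00, Nat.sub_zero, stirling2, Nat.cast_one, map_one, pow_zero,
      mul_one, one_mul, sub_self]
    exact zero_mem _
  | succ m ih =>
    intro l hl
    match l with
    | 0 =>
      rw [hH0, Nat.sub_zero]
      have h1 : stirling2 (m + 1) (m + 1) = stirling2 m m := by
        show (m + 1) * stirling2 m (m + 1) + stirling2 m m = stirling2 m m
        rw [stirling2_eq_zero m (m + 1) (by omega)]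
        ring
      rw [h1]
      simpa using ih 0 (Nat.zero_le m)
    | l + 1 =>
      rcases Nat.lt_or_ge l m with hlm | hlm
      · -- l < m case
        have h1 := ih (l + 1) hlm
        have h2 := keyA ((-1 : ℂ) ^ n * ((n : ℂ) ^ n)⁻¹)
          (stirling2 m (m - l) : ℂ) ((((m : ℂ) + 1) - ((l : ℂ) + 1)) / (n : ℂ))
          l Y (H m l) hY (ih l (by omega))
        have hmem := Ideal.add_mem _ h1
          (Ideal.mul_mem_left _ (Polynomial.C (n : ℂ)) h2)
        have hcoef : (stirling2 (m + 1) ((m + 1) - (l + 1)) : ℂ)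
            = (stirling2 m (m - (l + 1)) : ℂ)
              + (n : ℂ) * ((stirling2 m (m - l) : ℂ)
                * ((((m : ℂ) + 1) - ((l : ℂ) + 1)) / (n : ℂ))) := by
          obtain ⟨k, hk⟩ : ∃ k, m - l = k + 1 := ⟨m - l - 1, by omega⟩
          have e1 : (m + 1) - (l + 1) = k + 1 := by omega
          have e2 : m - (l + 1) = k := by omega
          have e3 : ((m : ℂ) + 1 - ((l : ℂ) + 1)) = ((k : ℂ) + 1) := by
            have h := congrArg (Nat.cast (R := ℂ)) (show m = l + (k + 1) by omega)
            push_cast at h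
            linear_combination h
          rw [e1, e2, hk, e3]
          show ((((k + 1) * stirling2 m (k + 1) + stirling2 m k : ℕ)) : ℂ) = _
          push_cast
          field_simp
          ring
        have heq : H (m + 1) (l + 1)
            - Polynomial.C (stirling2 (m + 1) ((m + 1) - (l + 1)) : ℂ) * Y ^ (l + 1)
            = (H m (l + 1) - Polynomial.C (stirling2 m (m - (l + 1)) : ℂ) * Y ^ (l + 1))
              + Polynomial.C (n : ℂ) *
                (Y * (Polynomial.X * Polynomial.derivative (H m l)
                  + Polynomial.C ((((m : ℂ) + 1) - ((l : ℂ) + 1)) / (n : ℂ)) * H m l)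
                  - Polynomial.C ((stirling2 m (m - l) : ℂ)
                    * ((((m : ℂ) + 1) - ((l : ℂ) + 1)) / (n : ℂ))) * Y ^ (l + 1)) := by
          rw [hrec m l, hcoef]
          simp only [map_add, map_mul]
          ring
        rw [heq]
        exact hmem
      · -- l = m case
        have hml : l = m := by omega
        have h2 := keyA ((-1 : ℂ) ^ n * ((n : ℂ) ^ n)⁻¹)
          (stirling2 m (m - l) : ℂ) ((((m : ℂ) + 1) - ((l : ℂ) + 1)) / (n : ℂ))
          l Y (H m l) hY (ih l (by omega))
        have hmem := Ideal.mul_mem_left _ (Polynomial.C (n : ℂ)) h2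
        have hz : ((((m : ℂ) + 1) - ((l : ℂ) + 1)) / (n : ℂ)) = 0 := by
          rw [hml]; ring
        have hs0 : (stirling2 (m + 1) ((m + 1) - (l + 1)) : ℂ) = 0 := by
          rw [show (m + 1) - (l + 1) = 0 by omega, stirling2_zero_right]
          exact Nat.cast_zero
        have heq : H (m + 1) (l + 1)
            - Polynomial.C (stirling2 (m + 1) ((m + 1) - (l + 1)) : ℂ) * Y ^ (l + 1)
            = Polynomial.C (n : ℂ) *
                (Y * (Polynomial.X * Polynomial.derivative (H m l)
                  + Polynomial.C ((((m : ℂ) + 1) - ((l : ℂ) + 1)) / (n : ℂ)) * H m l)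
                  - Polynomial.C ((stirling2 m (m - l) : ℂ)
                    * ((((m : ℂ) + 1) - ((l : ℂ) + 1)) / (n : ℂ))) * Y ^ (l + 1)) := by
          rw [hrec m l, hvanish m (l + 1) (by omega), hz, hs0]
          simp only [map_zero, zero_mul, mul_zero, zero_add, add_zero, sub_zero]
          ring
        rw [heq]
        exact hmem
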